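/- Let G be a (1-ε, m)-sparse graph with minimum degree at least m. Then for every vertex u, the number of vertices v ≠ u with |N(u) ∩ N(v)| > εK d is less than m, provided every vertex has degree at most Kd and minimum degree at least d/K with d/K ≥ m. More precisely: if G is K-almost-regular with average degree d, is (1-ε, βt)-sparse, and d/K ≥ βt, then for every vertex u, |{v ≠ u : |N(u)∩N(v)| > εKd}| < βt. -/
import Mathlib


open Finset

/-- Number of pairs `(a,b) ∈ A × B` with `{a,b}` an edge of `G`. -/
def epairs {V : Type*} [DecidableEq V] (G : SimpleGraph V) [DecidableRel G.Adj]
    (A B : Finset V) : ℕ :=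
  ((A ×ˢ B).filter fun p => G.Adj p.1 p.2).card

lemma epairs_eq_sum {V : Type*} [Fintype V] [DecidableEq V]
    (G : SimpleGraph V) [DecidableRel G.Adj] (A B : Finset V) :
    epairs G A B = ∑ a ∈ A, (B.filter fun b => G.Adj a b).card := by
  rw [epairs, Finset.card_eq_sum_card_fiberwise (f := Prod.fst) (t := A)
    (fun p hp => (Finset.mem_product.1 (Finset.mem_filter.1 hp).1).1)]
  refine Finset.sum_congr rfl fun a ha => ?_
  refine Finset.card_bij (fun p _ => p.2) ?_ ?_ ?_
  · rintro ⟨x, y⟩ hp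
    simp only [mem_filter, mem_product] at hp ⊢
    obtain ⟨⟨⟨_, hy⟩, hadj⟩, rfl⟩ := hp
    exact ⟨hy, hadj⟩
  · rintro ⟨x, y⟩ hp ⟨x', y'⟩ hp' h
    simp only [mem_filter] at hp hp'
    exact Prod.ext (hp.2.trans hp'.2.symm) h
  · intro b hb
    simp only [mem_filter] at hb
    exact ⟨(a, b), by simp [ha, hb.1, hb.2, mem_filter], rfl⟩

/-- If `G` is `K`-almost-regular with average degree `d` (so `d/K ≤ deg(v) ≤ Kd` for
every `v`), is `(1-ε, βt)`-sparse, and `d/K ≥ βt`, then for every vertex `u` the set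
`{v ≠ u : |N(u) ∩ N(v)| > εKd}` has size less than `βt`. -/
theorem few_vertices_with_large_codegree {V : Type*} [Fintype V] [DecidableEq V]
    (G : SimpleGraph V) [DecidableRel G.Adj] (ε K d β t : ℝ)
    (hε : 0 ≤ ε) (hK : 0 < K) (hβt : 0 < β * t)
    (hdeg : ∀ v : V, d / K ≤ (G.degree v : ℝ) ∧ (G.degree v : ℝ) ≤ K * d)
    (hsparse : ∀ A B : Finset V, β * t ≤ A.card → β * t ≤ B.card →
      (epairs G A B : ℝ) ≤ ε * A.card * B.card)
    (hdK : β * t ≤ d / K) :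
    ∀ u : V,
      (({v : V | v ≠ u ∧
          ε * K * d < ((G.neighborFinset u ∩ G.neighborFinset v).card : ℝ)} : Set V).ncard : ℝ)
        < β * t := by
  classical
  intro u
  by_contra hcon
  push_neg at hcon
  set S : Set V := {v : V | v ≠ u ∧
      ε * K * d < ((G.neighborFinset u ∩ G.neighborFinset v).card : ℝ)} with hSdef
  set A : Finset V := S.toFinset with hA
  have hncard : S.ncard = A.card := Set.ncard_eq_toFinset_card' S
  rw [hncard] at hcon
  set B : Finset V := G.neighborFinset u with hB
  have hBcard : (B.card : ℝ) = G.degree u := by simp [hB]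
  have hBlb : β * t ≤ (B.card : ℝ) := by
    rw [hBcard]; exact hdK.trans (hdeg u).1
  have hBub : (B.card : ℝ) ≤ K * d := by rw [hBcard]; exact (hdeg u).2
  have hApos : 0 < A.card := by
    by_contra hz
    push_neg at hz
    interval_cases h : A.card
    · simp [h] at hcon; linarith
  have hfilter : ∀ a : V, B.filter (fun b => G.Adj a b)
      = G.neighborFinset u ∩ G.neighborFinset a := by
    intro a
    ext b
    simp [hB, G.adj_comm]
  have hsum := epairs_eq_sum G A B
  have hlow : (A.card : ℝ) * (ε * K * d) < (epairs G A B : ℝ) := by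
    rw [hsum]
    push_cast
    have : ∀ a ∈ A, ε * K * d < ((B.filter (fun b => G.Adj a b)).card : ℝ) := by
      intro a ha
      rw [hfilter a]
      exact (Set.mem_toFinset.1 ha).2
    calc (A.card : ℝ) * (ε * K * d) = ∑ _a ∈ A, (ε * K * d) := by
          rw [Finset.sum_const, nsmul_eq_mul]
      _ < ∑ a ∈ A, ((B.filter (fun b => G.Adj a b)).card : ℝ) :=
          Finset.sum_lt_sum_of_nonempty (Finset.card_pos.1 hApos) this
  have hup := hsparse A B hcon hBlb
  have : ε * A.card * B.card ≤ (A.card : ℝ) * (ε * K * d) := by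
    have h1 : ε * (B.card : ℝ) ≤ ε * (K * d) := mul_le_mul_of_nonneg_left hBub hε
    have h2 : (0:ℝ) ≤ (A.card : ℝ) := Nat.cast_nonneg _
    nlinarith
  linarith
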